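/- The ideal M·Q^{n−m} of R is minimally generated by C(n, n−m+1)·n elements; that is, μ_R(M·Q^{n−m}) = C(n, n−m+1)·n. (Since the graded canonical module of R is K_R = Q^{n−m}(−m), this computes μ_R(M·K_R).) -/

import Mathlib

set_option synthInstance.maxHeartbeats 1000000
set_option linter.unusedSectionVars false
set_option maxHeartbeats 1000000

noncomputable section

open MvPolynomial

/-- The minimal number of generators of an ideal `I`, i.e. the least cardinality of a
finite generating set of `I`. -/
def idealMu {A : Type*} [CommRing A] (I : Ideal A) : ℕ :=
  sInf {c : ℕ | ∃ s : Finset A, s.card = c ∧ Ideal.span (s : Set A) = I}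

variable (k : Type*) [Field k] (m n : ℕ)

/-- The ideal `I₂(X)` of `2 × 2` minors of the generic `m × n` matrix
`X = (X_{ij})` in the polynomial ring `S = k[X_{ij}]`. -/
def detIdeal : Ideal (MvPolynomial (Fin m × Fin n) k) :=
  Ideal.span {f | ∃ (i₁ i₂ : Fin m) (j₁ j₂ : Fin n), i₁ < i₂ ∧ j₁ < j₂ ∧
    f = X (i₁, j₁) * X (i₂, j₂) - X (i₁, j₂) * X (i₂, j₁)}

/-- The determinantal ring `R = S/I₂(X)`. -/
abbrev DetRing := MvPolynomial (Fin m × Fin n) k ⧸ detIdeal k m n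

/-- `x_{ij}`, the image of `X_{ij}` in `R`. -/
def xbar (i : Fin m) (j : Fin n) : DetRing k m n :=
  Ideal.Quotient.mk _ (X (i, j))

/-- The graded maximal ideal `M = R₊`, generated by all the `x_{ij}`. -/
def maxIdeal : Ideal (DetRing k m n) :=
  Ideal.span (Set.range fun p : Fin m × Fin n => xbar k m n p.1 p.2)

/-- The ideal `Q = (x_{11}, x_{21}, …, x_{m1})` generated by the entries of the
first column of `X`. -/
def colIdeal : Ideal (DetRing k m n) :=
  Ideal.span {y | ∃ (i : Fin m) (j : Fin n), (j : ℕ) = 0 ∧ y = xbar k m n i j}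

namespace Stmt3Aux
open Pointwise

variable [NeZero n]

/-- the Segre ring -/
abbrev T := MvPolynomial (Fin m ⊕ Fin n) k

def phi : MvPolynomial (Fin m × Fin n) k →ₐ[k] T k m n :=
  aeval fun p => X (Sum.inl p.1) * X (Sum.inr p.2)

lemma phi_detIdeal : ∀ a ∈ detIdeal k m n, phi k m n a = 0 := by
  intro a ha
  have hle : detIdeal k m n ≤ RingHom.ker (phi k m n).toRingHom := by
    refine Ideal.span_le.mpr ?_
    rintro f ⟨i₁, i₂, j₁, j₂, h₁, h₂, rfl⟩
    simp only [SetLike.mem_coe, RingHom.mem_ker, AlgHom.toRingHom_eq_coe,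
      RingHom.coe_coe, map_sub, map_mul, phi, aeval_X]
    ring
  exact hle ha

def phibar : DetRing k m n →ₐ[k] T k m n :=
  Ideal.Quotient.liftₐ _ (phi k m n) (phi_detIdeal k m n)

lemma phibar_xbar (i : Fin m) (j : Fin n) :
    phibar k m n (xbar k m n i j) = X (Sum.inl i) * X (Sum.inr j) := by
  show phi k m n (X (i, j)) = _
  simp [phibar, xbar, Ideal.Quotient.liftₐ_apply, Ideal.Quotient.lift_mk, phi]

lemma comm_rel (a b : Fin m) (j : Fin n) :
    xbar k m n a j * xbar k m n b 0 = xbar k m n b j * xbar k m n a 0 := by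
  rcases eq_or_ne j 0 with rfl | hj
  · exact mul_comm _ _
  have key : ∀ a b : Fin m, a < b →
      xbar k m n a j * xbar k m n b 0 = xbar k m n b j * xbar k m n a 0 := by
    intro a b hab
    unfold xbar
    rw [← map_mul, ← map_mul, Ideal.Quotient.eq]
    have hgen : (X (a, 0) * X (b, j) - X (a, j) * X (b, 0) :
        MvPolynomial (Fin m × Fin n) k) ∈ detIdeal k m n :=
      Ideal.subset_span ⟨a, b, 0, j, hab, (Fin.zero_le j).lt_of_ne (Ne.symm hj), rfl⟩
    have : (X (a, j) * X (b, 0) - X (b, j) * X (a, 0) :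
        MvPolynomial (Fin m × Fin n) k)
        = -(X (a, 0) * X (b, j) - X (a, j) * X (b, 0)) := by ring
    rw [this]
    exact neg_mem hgen
  rcases lt_trichotomy a b with h | rfl | h
  · exact key a b h
  · rfl
  · exact (key b a h).symm

def colProd (l : List (Fin m)) : DetRing k m n :=
  (l.map fun i => xbar k m n i 0).prod

def F : List (Fin m) → Fin n → DetRing k m n
  | [], _ => 1
  | a :: t, j => xbar k m n a j * colProd k m n t

lemma colProd_cons (a : Fin m) (t : List (Fin m)) :
    colProd k m n (a :: t) = xbar k m n a 0 * colProd k m n t := by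
  simp [colProd]

lemma F_perm {l l' : List (Fin m)} (h : l.Perm l') (j : Fin n) :
    F k m n l j = F k m n l' j := by
  induction h with
  | nil => rfl
  | cons a h ih =>
      show xbar k m n a j * _ = xbar k m n a j * _
      rw [show colProd k m n _ = colProd k m n _ from (h.map _).prod_eq]
  | swap x y l =>
      show xbar k m n y j * colProd k m n (x :: l)
          = xbar k m n x j * colProd k m n (y :: l)
      rw [colProd_cons, colProd_cons, ← mul_assoc, ← mul_assoc, comm_rel]
  | trans h1 h2 ih1 ih2 => exact ih1.trans ih2

def gen (e : ℕ) (ω : Sym (Fin m) (e + 1) × Fin n) : DetRing k m n :=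
  F k m n (Multiset.sort (ω.1 : Multiset (Fin m)) (· ≤ ·)) ω.2

def nu (s : Multiset (Fin m)) : (Fin m ⊕ Fin n) →₀ ℕ :=
  (s.map fun i => Finsupp.single (Sum.inl i) 1).sum

def expo (e : ℕ) (ω : Sym (Fin m) (e + 1) × Fin n) : (Fin m ⊕ Fin n) →₀ ℕ :=
  nu m n (ω.1 : Multiset (Fin m)) + Finsupp.single (Sum.inr ω.2) 1
    + Finsupp.single (Sum.inr 0) e

lemma X_eq_monomial (s : Fin m ⊕ Fin n) :
    (X s : T k m n) = monomial (Finsupp.single s 1) 1 := rfl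

lemma nu_zero : nu m n 0 = 0 := by simp [nu]

lemma nu_cons (a : Fin m) (s : Multiset (Fin m)) :
    nu m n (a ::ₘ s) = Finsupp.single (Sum.inl a) 1 + nu m n s := by
  simp [nu]

lemma nu_coe_cons (a : Fin m) (t : List (Fin m)) :
    nu m n ↑(a :: t) = Finsupp.single (Sum.inl a) 1 + nu m n ↑t := by
  rw [← Multiset.cons_coe, nu_cons]

lemma phibar_colProd (t : List (Fin m)) :
    phibar k m n (colProd k m n t) =
      monomial (nu m n ↑t + Finsupp.single (Sum.inr (0 : Fin n)) t.length) 1 := by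
  induction t with
  | nil =>
      show phibar k m n 1 = _
      rw [map_one]
      simp [nu]
  | cons a t ih =>
      rw [colProd_cons, map_mul, ih, phibar_xbar, X_eq_monomial, X_eq_monomial,
        monomial_mul, monomial_mul, nu_coe_cons]
      rw [show ((a :: t : List (Fin m)).length : ℕ) = t.length + 1 from rfl]
      simp only [one_mul, mul_one]
      congr 1
      rw [Finsupp.single_add]
      abel

lemma phibar_gen (e : ℕ) (ω : Sym (Fin m) (e + 1) × Fin n) :
    phibar k m n (gen k m n e ω) = monomial (expo m n e ω) 1 := by
  obtain ⟨s, j⟩ := ω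
  set l := Multiset.sort (s : Multiset (Fin m)) (· ≤ ·) with hl
  have hlen : l.length = e + 1 := by
    rw [hl, Multiset.length_sort]
    exact s.2
  have hne : l ≠ [] := by
    intro h; rw [h] at hlen; simp at hlen
  obtain ⟨a, t, hat⟩ := List.exists_cons_of_ne_nil hne
  have htlen : t.length = e := by
    rw [hat] at hlen; simpa using hlen
  have hcoe : (s : Multiset (Fin m)) = ↑(a :: t) := by
    rw [← hat, hl, Multiset.sort_eq]
  show phibar k m n (F k m n l j) = _
  rw [hat]
  show phibar k m n (xbar k m n a j * colProd k m n t) = _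
  rw [map_mul, phibar_xbar, phibar_colProd, X_eq_monomial, X_eq_monomial,
    monomial_mul, monomial_mul, htlen]
  unfold expo
  rw [hcoe, nu_coe_cons]
  simp only [one_mul, mul_one]
  congr 1
  abel

lemma degree_add (σ τ : (Fin m ⊕ Fin n) →₀ ℕ) :
    ((σ + τ).sum fun _ c => c) = (σ.sum fun _ c => c) + (τ.sum fun _ c => c) :=
  Finsupp.sum_add_index' (by simp) (by simp)

lemma nu_apply_inl (s : Multiset (Fin m)) (i : Fin m) :
    nu m n s (Sum.inl i) = s.count i := by
  induction s using Multiset.induction_on with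
  | empty => simp [nu]
  | cons a s ih =>
      rw [nu_cons, Finsupp.add_apply, ih, Multiset.count_cons, Finsupp.single_apply]
      rcases eq_or_ne a i with rfl | h
      · simp [add_comm]
      · simp [h, Ne.symm h]

lemma nu_apply_inr (s : Multiset (Fin m)) (j : Fin n) :
    nu m n s (Sum.inr j) = 0 := by
  induction s using Multiset.induction_on with
  | empty => simp [nu]
  | cons a s ih => rw [nu_cons, Finsupp.add_apply, ih]; simp [Finsupp.single_apply]

lemma nu_degree (s : Multiset (Fin m)) :
    (nu m n s).sum (fun _ c => c) = Multiset.card s := by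
  induction s using Multiset.induction_on with
  | empty => simp [nu]
  | cons a s ih => rw [nu_cons, degree_add, ih]; simp [Finsupp.sum_single_index, add_comm]

lemma expo_degree (e : ℕ) (ω : Sym (Fin m) (e + 1) × Fin n) :
    (expo m n e ω).sum (fun _ c => c) = 2 * e + 2 := by
  unfold expo
  rw [degree_add, degree_add, nu_degree, Finsupp.sum_single_index rfl,
    Finsupp.sum_single_index rfl]
  have h2 : Multiset.card (ω.1 : Multiset (Fin m)) = e + 1 := ω.1.2
  omega

lemma expo_inj (e : ℕ) : Function.Injective (expo m n e) := by
  rintro ⟨s, j⟩ ⟨s', j'⟩ h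
  have hs : s = s' := by
    refine Subtype.ext (Multiset.ext.mpr fun i => ?_)
    have := congrArg (fun φ : (Fin m ⊕ Fin n) →₀ ℕ => φ (Sum.inl i)) h
    simpa [expo, Finsupp.add_apply, nu_apply_inl, Finsupp.single_apply] using this
  have hj : j = j' := by
    have := congrArg (fun φ : (Fin m ⊕ Fin n) →₀ ℕ => φ (Sum.inr j)) h
    simp only [expo, Finsupp.add_apply, nu_apply_inr, Finsupp.single_apply,
      Sum.inr.injEq, zero_add] at this
    split_ifs at this <;> omega
  exact Prod.ext hs hj

lemma gen_inj (e : ℕ) : Function.Injective (gen k m n e) := by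
  intro ω ω' h
  have := congrArg (phibar k m n) h
  rw [phibar_gen, phibar_gen] at this
  exact expo_inj m n e (monomial_left_injective (one_ne_zero) this)

def lowDeg (E : ℕ) : Ideal (T k m n) where
  carrier := {p | ∀ σ : (Fin m ⊕ Fin n) →₀ ℕ, (σ.sum fun _ c => c) < E → coeff σ p = 0}
  zero_mem' := fun σ _ => by simp
  add_mem' := fun {a b} ha hb σ hσ => by
    rw [coeff_add, ha σ hσ, hb σ hσ, add_zero]
  smul_mem' := fun c p hp σ hσ => by
    rw [smul_eq_mul, coeff_mul]
    refine Finset.sum_eq_zero ?_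
    rintro ⟨τ, ρ⟩ hmem
    rw [Finset.HasAntidiagonal.mem_antidiagonal] at hmem
    have hd : (σ.sum fun _ c => c) = (τ.sum fun _ c => c) + (ρ.sum fun _ c => c) := by
      rw [← hmem, degree_add]
    have : coeff ρ p = 0 := hp ρ (by omega)
    rw [this, mul_zero]

lemma xbar_mem_max (i : Fin m) (j : Fin n) : xbar k m n i j ∈ maxIdeal k m n :=
  Ideal.subset_span ⟨(i, j), rfl⟩

lemma xbar_mem_col (i : Fin m) : xbar k m n i 0 ∈ colIdeal k m n :=
  Ideal.subset_span ⟨i, 0, by simp, rfl⟩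

lemma colProd_mem (t : List (Fin m)) :
    colProd k m n t ∈ colIdeal k m n ^ t.length := by
  induction t with
  | nil =>
      show (1 : DetRing k m n) ∈ _
      rw [List.length_nil, Submodule.pow_zero, Ideal.one_eq_top]
      exact Submodule.mem_top
  | cons a t ih =>
      rw [colProd_cons, List.length_cons, Submodule.pow_succ, mul_comm (xbar k m n a 0)]
      exact Ideal.mul_mem_mul ih (xbar_mem_col k m n a)

lemma gen_exists (e : ℕ) (ω : Sym (Fin m) (e + 1) × Fin n) :
    ∃ a t, t.length = e ∧ ((ω.1 : Multiset (Fin m)) = ↑(a :: t)) ∧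
      gen k m n e ω = xbar k m n a ω.2 * colProd k m n t := by
  set l := Multiset.sort (ω.1 : Multiset (Fin m)) (· ≤ ·) with hl
  have hlen : l.length = e + 1 := by rw [hl, Multiset.length_sort]; exact ω.1.2
  have hne : l ≠ [] := by intro h; rw [h] at hlen; simp at hlen
  obtain ⟨a, t, hat⟩ := List.exists_cons_of_ne_nil hne
  refine ⟨a, t, by rw [hat] at hlen; simpa using hlen, by rw [← hat, hl, Multiset.sort_eq], ?_⟩
  show F k m n l ω.2 = _
  rw [hat]
  rfl

lemma span_gen_eq (e : ℕ) :
    Ideal.span (Set.range (gen k m n e)) = maxIdeal k m n * colIdeal k m n ^ e := by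
  apply le_antisymm
  · rw [Ideal.span_le]
    rintro x ⟨ω, rfl⟩
    obtain ⟨a, t, htlen, _, heq⟩ := gen_exists k m n e ω
    rw [heq]
    have := Ideal.mul_mem_mul (xbar_mem_max k m n a ω.2) (colProd_mem k m n t)
    rwa [htlen] at this
  · have hsp : colIdeal k m n ^ e = Ideal.span
        (({y | ∃ (i : Fin m) (j : Fin n), (j:ℕ) = 0 ∧ y = xbar k m n i j} :
          Set (DetRing k m n)) ^ e) := by
      unfold colIdeal
      exact Submodule.span_pow _ e
    unfold maxIdeal
    rw [hsp, Ideal.span_mul_span, Ideal.span_le]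
    rintro x hx
    rw [Set.mem_mul] at hx
    obtain ⟨u, ⟨⟨i, j⟩, rfl⟩, v, hv, rfl⟩ := hx
    rw [Set.mem_pow] at hv
    obtain ⟨f, hf⟩ := hv
    have hxf : ∀ a : Fin e, ∃ r : Fin m, (f a : DetRing k m n) = xbar k m n r 0 := by
      intro a
      obtain ⟨r, j', hj', he⟩ := (f a).2
      have hj0 : j' = 0 := Fin.ext (by simpa using hj')
      exact ⟨r, by rw [he, hj0]⟩
    choose r hr using hxf
    have hfun : (fun a : Fin e => ((f a : DetRing k m n))) = fun a => xbar k m n (r a) 0 :=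
      funext hr
    have hv' : v = colProd k m n (List.ofFn r) := by
      rw [← hf, colProd, List.map_ofFn, hfun]
      rfl
    have hFv : xbar k m n i j * v = F k m n (i :: List.ofFn r) j := by
      rw [hv']
      rfl
    rw [hFv]
    have hL : Multiset.card (↑(i :: List.ofFn r) : Multiset (Fin m)) = e + 1 := by
      simp
    refine Ideal.subset_span ⟨(⟨(↑(i :: List.ofFn r) : Multiset (Fin m)), hL⟩, j), ?_⟩
    exact F_perm k m n (Multiset.coe_eq_coe.mp (Multiset.sort_eq _ _)) j

lemma mem_lowDeg_iff {E : ℕ} {p : T k m n} :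
    p ∈ lowDeg k m n E ↔
      ∀ σ : (Fin m ⊕ Fin n) →₀ ℕ, (σ.sum fun _ c => c) < E → coeff σ p = 0 :=
  Iff.rfl

lemma monomial_mem_lowDeg {E : ℕ} {σ : (Fin m ⊕ Fin n) →₀ ℕ}
    (h : E ≤ σ.sum fun _ c => c) (c : k) :
    (monomial σ c : T k m n) ∈ lowDeg k m n E := by
  rw [mem_lowDeg_iff]
  intro τ hτ
  rw [coeff_monomial]
  split_ifs with h'
  · subst h'; omega
  · rfl

lemma lowDeg_mul (E₁ E₂ : ℕ) :
    lowDeg k m n E₁ * lowDeg k m n E₂ ≤ lowDeg k m n (E₁ + E₂) := by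
  rw [Ideal.mul_le]
  intro r hr s hs
  rw [mem_lowDeg_iff]
  intro σ hσ
  rw [coeff_mul]
  refine Finset.sum_eq_zero ?_
  rintro ⟨τ, ρ⟩ hmem
  rw [Finset.HasAntidiagonal.mem_antidiagonal] at hmem
  have hd : (σ.sum fun _ c => c) = (τ.sum fun _ c => c) + (ρ.sum fun _ c => c) := by
    rw [← hmem, degree_add]
  rcases (by omega : ((τ.sum fun _ c => c) < E₁) ∨ ((ρ.sum fun _ c => c) < E₂)) with h | h
  · rw [(mem_lowDeg_iff k m n).mp hr τ h, zero_mul]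
  · rw [(mem_lowDeg_iff k m n).mp hs ρ h, mul_zero]

lemma lowDeg_pow (E : ℕ) : ∀ e : ℕ, lowDeg k m n E ^ e ≤ lowDeg k m n (e * E)
  | 0 => by
      rw [pow_zero, Ideal.one_eq_top]
      intro p _
      rw [mem_lowDeg_iff]
      intro σ hσ
      omega
  | e + 1 => by
      rw [pow_succ]
      calc lowDeg k m n E ^ e * lowDeg k m n E
          ≤ lowDeg k m n (e * E) * lowDeg k m n E :=
            Ideal.mul_mono_left (lowDeg_pow E e)
        _ ≤ lowDeg k m n (e * E + E) := lowDeg_mul k m n _ _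
        _ = lowDeg k m n ((e + 1) * E) := by ring_nf

lemma map_max_le :
    Ideal.map (phibar k m n) (maxIdeal k m n) ≤ lowDeg k m n 2 := by
  unfold maxIdeal
  rw [Ideal.map_span, Ideal.span_le]
  rintro x ⟨y, ⟨⟨i, j⟩, rfl⟩, rfl⟩
  have : phibar k m n (xbar k m n i j)
      = monomial (Finsupp.single (Sum.inl i) 1 + Finsupp.single (Sum.inr j) 1) 1 := by
    rw [phibar_xbar, X_eq_monomial, X_eq_monomial, monomial_mul, one_mul]
  rw [this]
  exact monomial_mem_lowDeg k m n
    (by rw [degree_add, Finsupp.sum_single_index rfl, Finsupp.sum_single_index rfl]) 1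

lemma map_col_le :
    Ideal.map (phibar k m n) (colIdeal k m n) ≤ lowDeg k m n 2 := by
  unfold colIdeal
  rw [Ideal.map_span, Ideal.span_le]
  rintro x ⟨y, ⟨i, j, hj, rfl⟩, rfl⟩
  have : phibar k m n (xbar k m n i j)
      = monomial (Finsupp.single (Sum.inl i) 1 + Finsupp.single (Sum.inr j) 1) 1 := by
    rw [phibar_xbar, X_eq_monomial, X_eq_monomial, monomial_mul, one_mul]
  rw [this]
  exact monomial_mem_lowDeg k m n
    (by rw [degree_add, Finsupp.sum_single_index rfl, Finsupp.sum_single_index rfl]) 1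

lemma indep_core (e : ℕ) (c : Sym (Fin m) (e + 1) × Fin n → k)
    (hc : (∑ ω, c ω • gen k m n e ω) ∈
      maxIdeal k m n * (maxIdeal k m n * colIdeal k m n ^ e)) :
    ∀ ω, c ω = 0 := by
  intro ω₀
  have h1 : phibar k m n (∑ ω, c ω • gen k m n e ω)
      = ∑ ω, monomial (expo m n e ω) (c ω) := by
    rw [map_sum]
    refine Finset.sum_congr rfl fun ω _ => ?_
    rw [map_smul, phibar_gen, smul_monomial, smul_eq_mul, mul_one]
  have h2 : phibar k m n (∑ ω, c ω • gen k m n e ω) ∈ lowDeg k m n (2 * e + 4) := by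
    have hmem := Ideal.mem_map_of_mem (phibar k m n) hc
    have hle : Ideal.map (phibar k m n)
        (maxIdeal k m n * (maxIdeal k m n * colIdeal k m n ^ e))
        ≤ lowDeg k m n (2 * e + 4) := by
      rw [Ideal.map_mul, Ideal.map_mul, Ideal.map_pow]
      calc Ideal.map (phibar k m n) (maxIdeal k m n) *
            (Ideal.map (phibar k m n) (maxIdeal k m n) *
              Ideal.map (phibar k m n) (colIdeal k m n) ^ e)
          ≤ lowDeg k m n 2 * (lowDeg k m n 2 * lowDeg k m n 2 ^ e) := by
            refine Ideal.mul_mono (map_max_le k m n) (Ideal.mul_mono (map_max_le k m n) ?_)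
            exact Ideal.pow_right_mono (map_col_le k m n) e
        _ ≤ lowDeg k m n 2 * (lowDeg k m n 2 * lowDeg k m n (e * 2)) :=
            Ideal.mul_mono_right (Ideal.mul_mono_right (lowDeg_pow k m n 2 e))
        _ ≤ lowDeg k m n 2 * lowDeg k m n (2 + e * 2) :=
            Ideal.mul_mono_right (lowDeg_mul k m n _ _)
        _ ≤ lowDeg k m n (2 + (2 + e * 2)) := lowDeg_mul k m n _ _
        _ = lowDeg k m n (2 * e + 4) := by ring_nf
    exact hle hmem
  have h3 := (mem_lowDeg_iff k m n).mp h2 (expo m n e ω₀) (by rw [expo_degree]; omega)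
  rw [h1, coeff_sum] at h3
  rw [← h3]
  rw [Finset.sum_eq_single ω₀]
  · rw [coeff_monomial, if_pos rfl]
  · intro ω _ hne
    rw [coeff_monomial, if_neg fun hh => hne (expo_inj m n e hh)]
  · intro habs
    exact absurd (Finset.mem_univ ω₀) habs

lemma maxIdeal_eq_map :
    maxIdeal k m n = Ideal.map (Ideal.Quotient.mk (detIdeal k m n))
      (Ideal.span (X '' (Set.univ : Set (Fin m × Fin n)))) := by
  rw [Ideal.map_span, Set.image_univ, ← Set.range_comp]
  rfl

lemma decompose (r : DetRing k m n) :
    ∃ c : k, ∃ y ∈ maxIdeal k m n, r = algebraMap k (DetRing k m n) c + y := by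
  obtain ⟨p, rfl⟩ := Ideal.Quotient.mk_surjective r
  refine ⟨constantCoeff p, Ideal.Quotient.mk _ (p - C (constantCoeff p)), ?_, ?_⟩
  · have hmem : p - C (constantCoeff p)
        ∈ Ideal.span (X '' (Set.univ : Set (Fin m × Fin n))) := by
      rw [mem_ideal_span_X_image]
      intro σ hσ
      have hσ0 : σ ≠ 0 := by
        intro h0
        rw [mem_support_iff, h0] at hσ
        apply hσ
        simp [coeff_sub, constantCoeff_eq]
      obtain ⟨a, ha⟩ := Finsupp.ne_iff.mp hσ0
      exact ⟨a, Set.mem_univ a, ha⟩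
    rw [maxIdeal_eq_map]
    exact Ideal.mem_map_of_mem _ hmem
  · have halg : algebraMap k (DetRing k m n) (constantCoeff p)
        = Ideal.Quotient.mk (detIdeal k m n) (C (constantCoeff p)) := rfl
    rw [halg, ← map_add]
    congr 1
    ring

end Stmt3Aux

/-- **Corollary 3.4.** For `t = 2`, `μ_R(M·Q^{n−m}) = C(n, n−m+1)·n`.
Since `K_R = Q^{n−m}(−m)` is the graded canonical module of `R`, this computes
`μ_R(M·K_R)`. -/
theorem stmt_3 [Infinite k] (hm : 2 ≤ m) (hmn : m ≤ n) :
    idealMu (maxIdeal k m n * colIdeal k m n ^ (n - m)) =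
      Nat.choose n (n - m + 1) * n := by
  classical
  haveI : NeZero n := ⟨by omega⟩
  set e := n - m with he
  set I := maxIdeal k m n * colIdeal k m n ^ e with hI
  set N := Nat.choose n (e + 1) * n with hN
  have hΩcard : Fintype.card (Sym (Fin m) (e + 1) × Fin n) = N := by
    rw [Fintype.card_prod, Fintype.card_fin, Sym.card_sym_eq_multichoose, Fintype.card_fin,
      Nat.multichoose_eq, hN]
    congr 2
    omega
  have hginj := Stmt3Aux.gen_inj k m n e
  have hgenI : ∀ ω, Stmt3Aux.gen k m n e ω ∈ I := by
    intro ω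
    rw [hI, ← Stmt3Aux.span_gen_eq k m n e]
    exact Ideal.subset_span ⟨ω, rfl⟩
  set s₀ : Finset (DetRing k m n) := Finset.image (Stmt3Aux.gen k m n e) Finset.univ with hs₀
  have hcard₀ : s₀.card = N := by
    rw [hs₀, Finset.card_image_of_injective _ hginj, Finset.card_univ, hΩcard]
  have hspan₀ : Ideal.span (s₀ : Set (DetRing k m n)) = I := by
    rw [hs₀, Finset.coe_image, Finset.coe_univ, Set.image_univ]
    exact Stmt3Aux.span_gen_eq k m n e
  have hWitness : N ∈ {c : ℕ | ∃ s : Finset (DetRing k m n),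
      s.card = c ∧ Ideal.span (s : Set (DetRing k m n)) = I} := ⟨s₀, hcard₀, hspan₀⟩
  have hLower : ∀ c ∈ {c : ℕ | ∃ s : Finset (DetRing k m n),
      s.card = c ∧ Ideal.span (s : Set (DetRing k m n)) = I}, N ≤ c := by
    rintro c ⟨s, rfl, hspan⟩
    set J := maxIdeal k m n * I with hJ
    set q : DetRing k m n →ₐ[k] (DetRing k m n ⧸ J) := Ideal.Quotient.mkₐ k J with hq
    have hq0 : ∀ x : DetRing k m n, q x = 0 ↔ x ∈ J := by
      intro x
      rw [hq, Ideal.Quotient.mkₐ_eq_mk, Ideal.Quotient.eq_zero_iff_mem]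
    have hB : ∀ x ∈ I, q x ∈ Submodule.span k (⇑q '' (s : Set (DetRing k m n))) := by
      intro x hx
      rw [← hspan] at hx
      refine Submodule.span_induction
        (p := fun x _ => q x ∈ Submodule.span k (⇑q '' (s : Set (DetRing k m n))))
        (fun y hy => Submodule.subset_span ⟨y, hy, rfl⟩) ?_ ?_ ?_ hx
      · show q 0 ∈ Submodule.span k (⇑q '' (s : Set (DetRing k m n)))
        rw [map_zero]; exact Submodule.zero_mem _
      · intro y z _ _ hy hz
        show q (y + z) ∈ Submodule.span k (⇑q '' (s : Set (DetRing k m n)))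
        rw [map_add]; exact Submodule.add_mem _ hy hz
      · intro a y hy hqy
        obtain ⟨c', w, hw, rfl⟩ := Stmt3Aux.decompose k m n a
        show q ((algebraMap k (DetRing k m n) c' + w) • y)
            ∈ Submodule.span k (⇑q '' (s : Set (DetRing k m n)))
        have hsplit : (algebraMap k (DetRing k m n) c' + w) • y
            = c' • y + w * y := by
          rw [smul_eq_mul, add_mul, ← Algebra.smul_def]
        rw [hsplit, map_add, map_smul]
        have hwy : q (w * y) = 0 := by
          rw [hq0]
          rw [hJ]
          exact Ideal.mul_mem_mul hw (hspan ▸ hy)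
        rw [hwy, add_zero]
        exact Submodule.smul_mem _ _ hqy
    have hA : LinearIndependent k (fun ω => q (Stmt3Aux.gen k m n e ω)) := by
      rw [Fintype.linearIndependent_iff]
      intro c hc ω
      refine Stmt3Aux.indep_core k m n e c ?_ ω
      have hz : q (∑ ω, c ω • Stmt3Aux.gen k m n e ω) = 0 := by
        rw [map_sum]
        simpa [map_smul] using hc
      rw [hq0] at hz
      rw [hJ, hI] at hz
      exact hz
    set W := Submodule.span k (⇑q '' (s : Set (DetRing k m n))) with hW
    haveI : FiniteDimensional k W :=
      FiniteDimensional.span_of_finite k (s.finite_toSet.image _)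
    set v : Sym (Fin m) (e + 1) × Fin n → W :=
      fun ω => ⟨q (Stmt3Aux.gen k m n e ω), hB _ (hgenI ω)⟩ with hv
    have hvind : LinearIndependent k v := by
      refine LinearIndependent.of_comp W.subtype ?_
      exact hA
    have hfr : Module.finrank k W ≤ s.card := by
      have h1 : W = Submodule.span k ((s.image ⇑q : Finset _) : Set (DetRing k m n ⧸ J)) := by
        rw [hW, Finset.coe_image]
      have h2 := finrank_span_finset_le_card (R := k) (s.image ⇑q)
      rw [Set.finrank, ← h1] at h2
      exact le_trans h2 Finset.card_image_le
    calc N = Fintype.card (Sym (Fin m) (e + 1) × Fin n) := hΩcard.symm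
      _ ≤ Module.finrank k W := hvind.fintype_card_le_finrank
      _ ≤ s.card := hfr
  exact le_antisymm (Nat.sInf_le hWitness) (le_csInf ⟨N, hWitness⟩ hLower)
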